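/- (Lower bound) Let p be a positive proper policy over a finite alphabet 𝒶 with A = |𝒶| ≥ 2, and let n* be any node with cost c = d(n*)/π(n*). Let N̄(n*) = {n ∈ List 𝒶 : d(n)/π(n) ≤ c} and let L'(n*) be the frontier of N̄(n*), i.e. the set of nodes n ∉ N̄(n*) whose parent lies in N̄(n*). Then N̄(n*) and L'(n*) are finite and |N̄(n*)| ≥ (c · Σ_{n ∈ L'(n*)} π(n)/d(n) − 1)/(A − 1). (Equivalently, writing d̄ = 1/Σ_{n∈L'(n*)} π(n)/d(n) for the harmonic mean of the frontier depths, |N̄(n*)| ≥ (c/d̄ − 1)/(A−1).) -/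

import Mathlib

noncomputable def nodeProb {α : Type*} (p : List α → α → ℝ) (n : List α) : ℝ :=
  ∏ j : Fin n.length, p (n.take j) (n.get j)

lemma nodeProb_concat {α : Type*} [Inhabited α] (p : List α → α → ℝ) (n : List α) (a : α) :
    nodeProb p (n ++ [a]) = nodeProb p n * p n a := by
  have key : ∀ m : List α, nodeProb p m
      = ∏ j ∈ Finset.range m.length, p (m.take j) (m.getD j default) := by
    intro m
    unfold nodeProb
    rw [← Fin.prod_univ_eq_prod_range (fun j => p (m.take j) (m.getD j default))]
    apply Finset.prod_congr rfl
    intro j _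
    congr 1
    rw [List.getD_eq_getElem m default j.isLt]
    simp [List.get_eq_getElem]
  rw [key, key]
  have hlen : (n ++ [a]).length = n.length + 1 := by simp
  rw [hlen, Finset.prod_range_succ]
  congr 1
  · apply Finset.prod_congr rfl
    intro j hj
    rw [Finset.mem_range] at hj
    congr 1
    · exact List.take_append_of_le_length (le_of_lt hj)
    · rw [List.getD_eq_getElem _ default (by simp; omega), List.getD_eq_getElem _ default hj]
      simp [List.getElem_append_left, hj]
  · congr 1
    · exact List.take_left (l₁ := n) (l₂ := [a])
    · rw [List.getD_eq_getElem _ default (by simp)]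
      simp

lemma dropLast_concat_getLastD {α : Type*} (n : List α) (h : n ≠ []) (d : α) :
    n.dropLast ++ [n.getLastD d] = n := by
  rw [List.getLastD_eq_getLast?, List.getLast?_eq_getLast h]
  exact List.dropLast_append_getLast h

theorem lts_lower_bound {α : Type*} [Fintype α] [Nonempty α]
    (p : List α → α → ℝ)
    (hpos : ∀ n a, 0 < p n a)
    (hproper : ∀ n, ∑ a : α, p n a = 1)
    (hA : 2 ≤ Fintype.card α)
    (nstar : List α)
    (c : ℝ) (hc : c = (nstar.length : ℝ) / nodeProb p nstar)
    (N L : Set (List α))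
    (hN : N = {n : List α | (n.length : ℝ) / nodeProb p n ≤ c})
    (hL : L = {n : List α | n ∉ N ∧ n.dropLast ∈ N}) :
    N.Finite ∧ L.Finite ∧
      (N.ncard : ℝ)
        ≥ (c * (∑ᶠ n ∈ L, nodeProb p n / (n.length : ℝ)) - 1)
            / ((Fintype.card α : ℝ) - 1) := by
  classical
  haveI : Inhabited α := Classical.inhabited_of_nonempty ‹_›
  -- basic facts about nodeProb
  have hπpos : ∀ n : List α, 0 < nodeProb p n := fun n =>
    Finset.prod_pos (fun j _ => hpos _ _)
  have hple1 : ∀ n a, p n a ≤ 1 := by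
    intro n a
    calc p n a ≤ ∑ b : α, p n b :=
          Finset.single_le_sum (fun b _ => (hpos n b).le) (Finset.mem_univ a)
    _ = 1 := hproper n
  have hπle1 : ∀ n : List α, nodeProb p n ≤ 1 := fun n =>
    Finset.prod_le_one (fun j _ => (hpos _ _).le) (fun j _ => hple1 _ _)
  have hc0 : 0 ≤ c := by
    rw [hc]; exact div_nonneg (by positivity) (hπpos nstar).le
  have hrootN : ([] : List α) ∈ N := by
    rw [hN]; simpa [nodeProb] using hc0
  -- members of N have length ≤ c
  have hNlen : ∀ n ∈ N, (n.length : ℝ) ≤ c := by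
    intro n hn
    rw [hN] at hn
    calc (n.length : ℝ) = (n.length : ℝ) / 1 := by ring
    _ ≤ (n.length : ℝ) / nodeProb p n :=
        div_le_div_of_nonneg_left (by positivity) (hπpos n) (hπle1 n)
    _ ≤ c := hn
  -- N is closed under dropLast
  have hπdrop : ∀ n : List α, n ≠ [] → nodeProb p n ≤ nodeProb p n.dropLast := by
    intro n hne
    have h1 := dropLast_concat_getLastD n hne default
    have h2 := nodeProb_concat p n.dropLast (n.getLastD default)
    rw [h1] at h2
    rw [h2]
    calc nodeProb p n.dropLast * p n.dropLast (n.getLastD default)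
        ≤ nodeProb p n.dropLast * 1 :=
          mul_le_mul_of_nonneg_left (hple1 _ _) (hπpos _).le
    _ = nodeProb p n.dropLast := by ring
  have hNdrop : ∀ n ∈ N, n.dropLast ∈ N := by
    intro n hn
    by_cases hne : n = []
    · simpa [hne] using hrootN
    · rw [hN] at hn ⊢
      simp only [Set.mem_setOf_eq] at hn ⊢
      refine le_trans ?_ hn
      apply div_le_div₀ (by positivity) ?_ (hπpos n) (hπdrop n hne)
      have : n.dropLast.length ≤ n.length := by
        simp [List.length_dropLast]
      exact_mod_cast this
  -- finiteness
  have hNfin : N.Finite := by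
    apply (List.finite_length_le α ⌊c⌋₊).subset
    intro n hn
    simp only [Set.mem_setOf_eq]
    exact Nat.le_floor (hNlen n hn)
  have hLfin : L.Finite := by
    apply (List.finite_length_le α (⌊c⌋₊ + 1)).subset
    intro n hn
    rw [hL] at hn
    have := Nat.le_floor (hNlen _ hn.2)
    simp only [Set.mem_setOf_eq]
    have hd : n.dropLast.length = n.length - 1 := List.length_dropLast
    omega
  refine ⟨hNfin, hLfin, ?_⟩
  set Nf := hNfin.toFinset with hNf
  set Lf := hLfin.toFinset with hLf
  have hmemN : ∀ n, n ∈ Nf ↔ n ∈ N := fun n => hNfin.mem_toFinset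
  have hmemL : ∀ n, n ∈ Lf ↔ n ∈ L := fun n => hLfin.mem_toFinset
  -- L elements are nonempty and not in N
  have hLne : ∀ n ∈ L, n ≠ [] := by
    intro n hn hne
    rw [hL] at hn
    exact hn.1 (hne ▸ hrootN)
  -- counting: (Nf.card - 1) + Lf.card ≤ Nf.card * A
  have hrootNf : ([] : List α) ∈ Nf := (hmemN _).mpr hrootN
  have hNfpos : 1 ≤ Nf.card := Finset.card_pos.mpr ⟨[], hrootNf⟩
  have hcount : (Nf.card - 1) + Lf.card ≤ Nf.card * Fintype.card α := by
    have hdisj : Disjoint (Nf.erase []) Lf := by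
      rw [Finset.disjoint_left]
      intro n hn hn'
      have h1 : n ∈ N := (hmemN _).mp (Finset.mem_of_mem_erase hn)
      have h2 : n ∈ L := (hmemL _).mp hn'
      rw [hL] at h2
      exact h2.1 h1
    have hinj : ((Nf.erase []) ∪ Lf).card ≤ (Nf ×ˢ (Finset.univ : Finset α)).card := by
      apply Finset.card_le_card_of_injOn (fun n => (n.dropLast, n.getLastD default))
      · intro n hn
        rw [Finset.mem_coe, Finset.mem_union] at hn
        have hne : n ≠ [] := by
          rcases hn with hn | hn
          · exact Finset.ne_of_mem_erase hn
          · exact hLne n ((hmemL _).mp hn)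
        have hdrop : n.dropLast ∈ N := by
          rcases hn with hn | hn
          · exact hNdrop n ((hmemN _).mp (Finset.mem_of_mem_erase hn))
          · have := (hmemL _).mp hn; rw [hL] at this; exact this.2
        simp only [Finset.mem_coe, Finset.mem_product, Finset.mem_univ, and_true]
        exact (hmemN _).mpr hdrop
      · intro n₁ h₁ n₂ h₂ heq
        have hne₁ : n₁ ≠ [] := by
          rw [Finset.coe_union, Set.mem_union] at h₁
          rcases h₁ with h | h
          · exact Finset.ne_of_mem_erase h
          · exact hLne n₁ ((hmemL _).mp h)
        have hne₂ : n₂ ≠ [] := by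
          rw [Finset.coe_union, Set.mem_union] at h₂
          rcases h₂ with h | h
          · exact Finset.ne_of_mem_erase h
          · exact hLne n₂ ((hmemL _).mp h)
        have e1 := dropLast_concat_getLastD n₁ hne₁ default
        have e2 := dropLast_concat_getLastD n₂ hne₂ default
        simp only [Prod.mk.injEq] at heq
        rw [← e1, ← e2, heq.1, heq.2]
    rw [Finset.card_union_of_disjoint hdisj, Finset.card_erase_of_mem hrootNf,
      Finset.card_product, Finset.card_univ] at hinj
    exact hinj
  -- sum bound
  have hSrw : (∑ᶠ n ∈ L, nodeProb p n / (n.length : ℝ))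
      = ∑ n ∈ Lf, nodeProb p n / (n.length : ℝ) := by
    conv_lhs => rw [← hLfin.coe_toFinset]
    rw [finsum_mem_coe_finset]
  have hsum : c * (∑ n ∈ Lf, nodeProb p n / (n.length : ℝ)) ≤ Lf.card := by
    rw [Finset.mul_sum]
    calc ∑ n ∈ Lf, c * (nodeProb p n / (n.length : ℝ))
        ≤ ∑ n ∈ Lf, 1 := by
          apply Finset.sum_le_sum
          intro n hn
          have hnL := (hmemL _).mp hn
          have hne := hLne n hnL
          have hdpos : (0:ℝ) < n.length := by
            have : 0 < n.length := List.length_pos_iff.mpr hne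
            exact_mod_cast this
          have hnotN : ¬ ((n.length : ℝ) / nodeProb p n ≤ c) := by
            rw [hL] at hnL
            have := hnL.1
            rw [hN] at this
            simpa using this
          push_neg at hnotN
          have hcle : c * nodeProb p n ≤ (n.length : ℝ) :=
            (le_div_iff₀ (hπpos n)).mp hnotN.le
          rw [mul_div_assoc'] 
          rw [div_le_one hdpos]
          exact hcle
    _ = Lf.card := by simp
  -- finish
  have hNcard : (N.ncard : ℝ) = (Nf.card : ℝ) := by
    rw [Set.ncard_eq_toFinset_card _ hNfin]
  rw [hSrw, hNcard, ge_iff_le, div_le_iff₀ (by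
    have : (2:ℝ) ≤ (Fintype.card α : ℝ) := by exact_mod_cast hA
    linarith)]
  have hLcardle : (Lf.card : ℝ) ≤ (Nf.card : ℝ) * ((Fintype.card α : ℝ) - 1) + 1 := by
    have : Lf.card + Nf.card ≤ Nf.card * Fintype.card α + 1 := by omega
    have h' : (Lf.card : ℝ) + Nf.card ≤ Nf.card * Fintype.card α + 1 := by exact_mod_cast this
    linarith [h']
  linarith [hsum, hLcardle]
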